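/- h(3) = 4: there exist 4 cubes in the discrete torus (ℤ/4ℤ)^3 such that every cube of the torus meets one of them, and no family of 3 cubes has this property. -/
import Mathlib


/-- The cube `v + {0,1}^n` in the discrete torus `(ℤ/4ℤ)^n`. -/
def cube {n : ℕ} (v : Fin n → ZMod 4) : Set (Fin n → ZMod 4) :=
  {x | ∀ i, x i = v i ∨ x i = v i + 1}

/-- A blocking set: a family of cubes meeting every cube of the torus. -/
def IsBlocking {n : ℕ} (B : Finset (Fin n → ZMod 4)) : Prop :=
  ∀ w : Fin n → ZMod 4, ∃ v ∈ B, ¬ Disjoint (cube v) (cube w)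

lemma coord_meet : ∀ a b : ZMod 4,
    (∃ x : ZMod 4, (x = a ∨ x = a + 1) ∧ (x = b ∨ x = b + 1)) ↔ a - b ≠ 2 := by
  decide

lemma not_disjoint_iff {n : ℕ} (v w : Fin n → ZMod 4) :
    ¬ Disjoint (cube v) (cube w) ↔ ∀ i, v i - w i ≠ 2 := by
  rw [Set.not_disjoint_iff]
  constructor
  · rintro ⟨x, hv, hw⟩ i
    exact (coord_meet (v i) (w i)).mp ⟨x i, hv i, hw i⟩
  · intro h
    choose x hx using fun i => (coord_meet (v i) (w i)).mpr (h i)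
    exact ⟨x, fun i => (hx i).1, fun i => (hx i).2⟩


theorem h_three_eq_four :
    (∃ B : Finset (Fin 3 → ZMod 4), B.card = 4 ∧ IsBlocking B) ∧
    (∀ B : Finset (Fin 3 → ZMod 4), IsBlocking B → 4 ≤ B.card) := by
  constructor
  · refine ⟨{![0,0,0], ![1,1,1], ![2,2,2], ![3,3,3]}, ?_, ?_⟩
    · decide
    · intro w
      have : ∃ v ∈ ({![0,0,0], ![1,1,1], ![2,2,2], ![3,3,3]} :
          Finset (Fin 3 → ZMod 4)), ∀ i, v i - w i ≠ 2 := by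
        revert w; decide
      obtain ⟨v, hv, h⟩ := this
      exact ⟨v, hv, (not_disjoint_iff v w).mpr h⟩
  · intro B hB
    by_contra hlt
    push_neg at hlt
    have hcard : B.card ≤ 3 := by omega
    -- B is contained in a set of three elements
    obtain ⟨a, b, c, hsub⟩ : ∃ a b c : Fin 3 → ZMod 4, ∀ x ∈ B, x = a ∨ x = b ∨ x = c := by
      interval_cases h : B.card
      · exact ⟨0, 0, 0, fun x hx => absurd hx (by simp [Finset.card_eq_zero.mp h])⟩
      · obtain ⟨a, ha⟩ := Finset.card_eq_one.mp h
        exact ⟨a, a, a, fun x hx => by simp [ha] at hx; tauto⟩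
      · obtain ⟨a, b, _, hab⟩ := Finset.card_eq_two.mp h
        exact ⟨a, b, b, fun x hx => by simp [hab] at hx; tauto⟩
      · obtain ⟨a, b, c, _, _, _, habc⟩ := Finset.card_eq_three.mp h
        exact ⟨a, b, c, fun x hx => by simp [habc] at hx; tauto⟩
    set w : Fin 3 → ZMod 4 := ![a 0 + 2, b 1 + 2, c 2 + 2] with hw
    obtain ⟨v, hvB, hnd⟩ := hB w
    rw [not_disjoint_iff] at hnd
    rcases hsub v hvB with rfl | rfl | rfl
    · exact hnd 0 (by simp [hw]; decide)
    · exact hnd 1 (by simp [hw]; decide)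
    · exact hnd 2 (by simp [hw]; decide)
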